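/- Let α ∈ (1/3, 1), let x : [0,3] → ℝ be α-Hölder, let a : [0,3] → ℝ be of class C¹, and let u : ℝ² → ℝ be of class C³. Then for every t ∈ [0,2] the Russo–Vallois symmetric integral ∫_0^t (∂u/∂x)(x(s), a(s)) d°x(s) exists and the change-of-variables formula u(x(t), a(t)) = u(x(0), a(0)) + ∫_0^t (∂u/∂x)(x(s), a(s)) d°x(s) + ∫_0^t (∂u/∂v)(x(s), a(s)) a′(s) ds holds. -/

import Mathlib

open MeasureTheory Filter Set

/-- `z` is `α`-Hölder on the interval `[a, b]`. -/
def HolderOnIcc (α a b : ℝ) (z : ℝ → ℝ) : Prop :=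
  ∃ L > 0, ∀ s ∈ Set.Icc a b, ∀ t ∈ Set.Icc a b, |z t - z s| ≤ L * |t - s| ^ α

/-- `I` is the Russo–Vallois symmetric integral `∫_a^b z(s) d°x(s)` (for `a > b` the
interval integral is by convention the negative of the one from `b` to `a`). -/
def RVTendsto (z x : ℝ → ℝ) (a b I : ℝ) : Prop :=
  Filter.Tendsto
    (fun ε : ℝ => ε⁻¹ * ∫ s in a..b, ((z (s + ε) + z s) / 2) * (x (s + ε) - x s))
    (nhdsWithin 0 (Set.Ioi 0)) (nhds I)

/-- `A` is an `α`-Lévy area of order 0 associated with `γ = (x, y)` on `[0, 2]`. -/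
def IsLevyArea0 (α : ℝ) (x y : ℝ → ℝ) (A : ℝ → ℝ → ℝ) : Prop :=
  (∀ r ∈ Set.Icc (0:ℝ) 2, ∀ s ∈ Set.Icc (0:ℝ) 2, ∀ t ∈ Set.Icc (0:ℝ) 2,
    A r s + A s t + A t r
      = -(1/2) * ((y t - y s) * (x r - x s) - (y r - y s) * (x t - x s)))
  ∧ ∃ C > 0, ∀ s ∈ Set.Icc (0:ℝ) 2, ∀ t ∈ Set.Icc (0:ℝ) 2,
      |A s t| ≤ C * |t - s| ^ (2 * α)

/-- The `ε`-approximation `I_ε^{[a,b]}(f)` of the corrected symmetric integral. -/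
noncomputable def Ieps (x y : ℝ → ℝ) (A : ℝ → ℝ → ℝ) (f : ℝ → ℝ) (a b ε : ℝ) : ℝ :=
  ε⁻¹ * (∫ u in a..b, ((f (y u) + f (y (u + ε))) / 2) * (x (u + ε) - x u))
    + ε⁻¹ * (∫ u in a..b, deriv f (y u) * A u (u + ε))

set_option maxHeartbeats 4000000

lemma seg_norm_le {E : Type*} [NormedAddCommGroup E] [NormedSpace ℝ E] {p q z : E}
    (hz : z ∈ segment ℝ p q) : ‖z - p‖ ≤ ‖q - p‖ := by
  obtain ⟨θ, η, hθ, hη, hsum, rfl⟩ := hz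
  have : θ • p + η • q - p = η • (q - p) := by
    have : θ = 1 - η := by linarith
    subst this; module
  rw [this, norm_smul]
  calc ‖η‖ * ‖q - p‖ ≤ 1 * ‖q - p‖ := by
        apply mul_le_mul_of_nonneg_right _ (norm_nonneg _)
        rw [Real.norm_eq_abs, abs_of_nonneg hη]; linarith
    _ = ‖q - p‖ := one_mul _

lemma seg_mvt {E F : Type*} [NormedAddCommGroup E] [NormedSpace ℝ E]
    [NormedAddCommGroup F] [NormedSpace ℝ F]
    {v : E → F} {v' : E → E →L[ℝ] F} {p q : E} (φ : E →L[ℝ] F) {M : ℝ}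
    (hv : ∀ z ∈ segment ℝ p q, HasFDerivAt v (v' z) z)
    (hb : ∀ z ∈ segment ℝ p q, ‖v' z - φ‖ ≤ M) :
    ‖v q - v p - φ (q - p)‖ ≤ M * ‖q - p‖ :=
  (convex_segment p q).norm_image_sub_le_of_norm_hasFDerivWithin_le'
    (fun z hz => (hv z hz).hasFDerivWithinAt) hb
    (left_mem_segment ℝ p q) (right_mem_segment ℝ p q)

lemma taylor_cubic {E : Type*} [NormedAddCommGroup E] [NormedSpace ℝ E]
    {f : E → ℝ} {f' : E → E →L[ℝ] ℝ} {f'' : E → E →L[ℝ] E →L[ℝ] ℝ} {p q : E} {M : ℝ}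
    (hf : ∀ z, HasFDerivAt f (f' z) z)
    (hf' : ∀ z, HasFDerivAt f' (f'' z) z)
    (hM : 0 ≤ M)
    (hlip : ∀ z ∈ segment ℝ p q, ‖f'' z - f'' p‖ ≤ M * ‖z - p‖) :
    |f q - f p - f' p (q - p) - (1/2 : ℝ) * (f'' p (q - p)) (q - p)| ≤ M * ‖q - p‖ ^ 3 := by
  have hsymm : ∀ v w : E, f'' p v w = f'' p w v :=
    second_derivative_symmetric hf (hf' p)
  -- Step A: first-order Taylor for f'
  have hA : ∀ y ∈ segment ℝ p q, ‖f' y - f' p - f'' p (y - p)‖ ≤ M * ‖q - p‖ * ‖y - p‖ := by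
    intro y hy
    have hsub : segment ℝ p y ⊆ segment ℝ p q :=
      (convex_segment p q).segment_subset (left_mem_segment ℝ p q) hy
    calc ‖f' y - f' p - f'' p (y - p)‖ ≤ (M * ‖q - p‖) * ‖y - p‖ := by
          apply seg_mvt (f'' p) (fun z hz => hf' z)
          intro z hz
          calc ‖f'' z - f'' p‖ ≤ M * ‖z - p‖ := hlip z (hsub hz)
            _ ≤ M * ‖q - p‖ :=
                mul_le_mul_of_nonneg_left (seg_norm_le (hsub hz)) hM
      _ = M * ‖q - p‖ * ‖y - p‖ := by ring
  -- the auxiliary function G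
  set G : E → ℝ := fun y => f y - f' p (y - p) - (1/2 : ℝ) * ((f'' p (y - p)) (y - p)) with hG
  have hGderiv : ∀ y : E, HasFDerivAt G (f' y - f' p - f'' p (y - p)) y := by
    intro y
    have hsubd : HasFDerivAt (fun y : E => y - p) (ContinuousLinearMap.id ℝ E) y :=
      (hasFDerivAt_id y).sub_const p
    have h1 : HasFDerivAt (fun y : E => f' p (y - p)) (f' p) y := by
      have h := (f' p).hasFDerivAt.comp y hsubd
      simp only [Function.comp_def, ContinuousLinearMap.comp_id] at h
      exact h
    have hc : HasFDerivAt (fun y : E => f'' p (y - p)) (f'' p) y := by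
      have h := (f'' p).hasFDerivAt.comp y hsubd
      simp only [Function.comp_def, ContinuousLinearMap.comp_id] at h
      exact h
    have h2 : HasFDerivAt (fun y : E => (f'' p (y - p)) (y - p))
        ((f'' p (y - p)).comp (ContinuousLinearMap.id ℝ E) + (f'' p).flip (y - p)) y :=
      hc.clm_apply hsubd
    have h2' : HasFDerivAt (fun y : E => (1/2 : ℝ) * ((f'' p (y - p)) (y - p)))
        ((1/2 : ℝ) • ((f'' p (y - p)).comp (ContinuousLinearMap.id ℝ E) + (f'' p).flip (y - p))) y :=
      h2.const_mul _
    have heq : (f' y - f' p - f'' p (y - p)) =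
        f' y - f' p - (1/2 : ℝ) • ((f'' p (y - p)).comp (ContinuousLinearMap.id ℝ E)
          + (f'' p).flip (y - p)) := by
      ext w
      simp
      rw [hsymm w y, hsymm w p]
      ring
    rw [heq]
    exact ((hf y).sub h1).sub h2'
  have key : ‖G q - G p‖ ≤ (M * ‖q - p‖ ^ 2) * ‖q - p‖ := by
    have := (convex_segment p q).norm_image_sub_le_of_norm_hasFDerivWithin_le
      (f' := fun y => f' y - f' p - f'' p (y - p))
      (fun z hz => (hGderiv z).hasFDerivWithinAt)
      (C := M * ‖q - p‖ ^ 2) ?_ (left_mem_segment ℝ p q) (right_mem_segment ℝ p q)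
    · exact this
    · intro z hz
      calc ‖f' z - f' p - f'' p (z - p)‖ ≤ M * ‖q - p‖ * ‖z - p‖ := hA z hz
        _ ≤ M * ‖q - p‖ * ‖q - p‖ :=
            mul_le_mul_of_nonneg_left (seg_norm_le hz) (by positivity)
        _ = M * ‖q - p‖ ^ 2 := by ring
  have hGp : G p = f p := by simp [hG]
  have hGq : G q = f q - f' p (q - p) - (1/2 : ℝ) * (f'' p (q - p)) (q - p) := rfl
  calc |f q - f p - f' p (q - p) - (1/2 : ℝ) * (f'' p (q - p)) (q - p)|
      = ‖G q - G p‖ := by rw [Real.norm_eq_abs]; congr 1; rw [hGq, hGp]; ring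
    _ ≤ (M * ‖q - p‖ ^ 2) * ‖q - p‖ := key
    _ = M * ‖q - p‖ ^ 3 := by ring

lemma trapezoid {E : Type*} [NormedAddCommGroup E] [NormedSpace ℝ E]
    {f : E → ℝ} {f' : E → E →L[ℝ] ℝ} {f'' : E → E →L[ℝ] E →L[ℝ] ℝ} {p q : E} {M : ℝ}
    (hf : ∀ z, HasFDerivAt f (f' z) z)
    (hf' : ∀ z, HasFDerivAt f' (f'' z) z)
    (hM : 0 ≤ M)
    (hlip : ∀ z ∈ segment ℝ p q, ∀ w ∈ segment ℝ p q, ‖f'' z - f'' w‖ ≤ M * ‖z - w‖) :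
    |f q - f p - (f' p (q - p) + f' q (q - p)) / 2| ≤ 2 * M * ‖q - p‖ ^ 3 := by
  have hseg_pq := left_mem_segment ℝ p q
  have hseg_qp := right_mem_segment ℝ p q
  have h1 : |f q - f p - f' p (q - p) - (1/2 : ℝ) * (f'' p (q - p)) (q - p)| ≤ M * ‖q - p‖ ^ 3 :=
    taylor_cubic hf hf' hM (fun z hz => hlip z hz p hseg_pq)
  have h2 : |f p - f q - f' q (p - q) - (1/2 : ℝ) * (f'' q (p - q)) (p - q)| ≤ M * ‖p - q‖ ^ 3 := by
    apply taylor_cubic hf hf' hM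
    intro z hz
    rw [segment_symm] at hz
    exact hlip z hz q hseg_qp
  have hnorm : ‖p - q‖ = ‖q - p‖ := norm_sub_rev p q
  rw [hnorm] at h2
  have hq2 : (f'' q (p - q)) (p - q) = (f'' q (q - p)) (q - p) := by
    have : p - q = -(q - p) := by abel
    rw [this]
    simp
    ring
  have hfq : f' q (p - q) = - f' q (q - p) := by
    have : p - q = -(q - p) := by abel
    rw [this]; simp
  rw [hq2, hfq] at h2
  have hdiff : |(f'' p (q - p)) (q - p) - (f'' q (q - p)) (q - p)| ≤ M * ‖q - p‖ ^ 3 := by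
    have : (f'' p (q - p)) (q - p) - (f'' q (q - p)) (q - p) = (((f'' p) - (f'' q)) (q - p)) (q - p) := by
      simp
    rw [this, ← Real.norm_eq_abs]
    calc ‖(((f'' p) - (f'' q)) (q - p)) (q - p)‖ ≤ ‖((f'' p) - (f'' q)) (q - p)‖ * ‖q - p‖ :=
          ContinuousLinearMap.le_opNorm _ _
      _ ≤ (‖(f'' p) - (f'' q)‖ * ‖q - p‖) * ‖q - p‖ := by
          apply mul_le_mul_of_nonneg_right (ContinuousLinearMap.le_opNorm _ _) (norm_nonneg _)
      _ ≤ ((M * ‖p - q‖) * ‖q - p‖) * ‖q - p‖ := by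
          have := hlip p hseg_pq q hseg_qp
          have h' : ‖f'' p - f'' q‖ ≤ M * ‖p - q‖ := this
          exact mul_le_mul_of_nonneg_right
            (mul_le_mul_of_nonneg_right h' (norm_nonneg _)) (norm_nonneg _)
      _ = M * ‖q - p‖ ^ 3 := by rw [hnorm]; ring
  -- combine
  have hMc : (0:ℝ) ≤ M * ‖q - p‖ ^ 3 := by positivity
  rw [abs_le] at h1 h2 hdiff ⊢
  constructor <;> [linarith; linarith]

lemma rpow_tendsto {c : ℝ} (hc : 0 < c) :
    Tendsto (fun ε : ℝ => ε ^ c) (nhdsWithin 0 (Ioi 0)) (nhds 0) := by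
  have h := (Real.continuousAt_rpow_const 0 c (Or.inr hc.le)).tendsto
  rw [Real.zero_rpow hc.ne'] at h
  exact h.mono_left nhdsWithin_le_nhds

lemma avg_tendsto {F : ℝ → ℝ} (hF : ContinuousOn F (Icc 0 3)) {c : ℝ}
    (hc : c ∈ Icc (0:ℝ) 2) :
    Tendsto (fun ε => ε⁻¹ * ∫ s in c..c+ε, F s) (nhdsWithin 0 (Ioi 0)) (nhds (F c)) := by
  rw [Metric.tendsto_nhdsWithin_nhds]
  intro η hη
  have hucF := isCompact_Icc.uniformContinuousOn_of_continuous hF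
  rw [Metric.uniformContinuousOn_iff] at hucF
  obtain ⟨δ₀, hδ₀, hδ⟩ := hucF (η/2) (by positivity)
  refine ⟨min δ₀ 1, by positivity, ?_⟩
  intro ε hε hdist
  have hε0 : (0:ℝ) < ε := hε
  rw [dist_zero_right, Real.norm_eq_abs, abs_of_pos hε0] at hdist
  have hε1 : ε ≤ 1 := le_of_lt (lt_of_lt_of_le hdist (min_le_right _ _))
  have hεδ : ε < δ₀ := lt_of_lt_of_le hdist (min_le_left _ _)
  have hcc : c ≤ c + ε := by linarith
  have hsub : Icc c (c+ε) ⊆ Icc 0 3 := Icc_subset_Icc hc.1 (by linarith [hc.2])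
  have hint : IntervalIntegrable F volume c (c+ε) := by
    apply ContinuousOn.intervalIntegrable
    rw [uIcc_of_le hcc]
    exact hF.mono hsub
  have key : ε⁻¹ * (∫ s in c..c+ε, F s) - F c = ε⁻¹ * ∫ s in c..c+ε, (F s - F c) := by
    rw [intervalIntegral.integral_sub hint intervalIntegrable_const,
      intervalIntegral.integral_const]
    have h1 : (c + ε - c) • F c = ε * F c := by simp [smul_eq_mul]
    rw [h1, mul_sub]
    field_simp
  have hbnd : |∫ s in c..c+ε, (F s - F c)| ≤ (η/2) * |c + ε - c| := by
    rw [← Real.norm_eq_abs]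
    apply intervalIntegral.norm_integral_le_of_norm_le_const
    intro s hs
    rw [uIoc_of_le hcc] at hs
    have hs3 : s ∈ Icc (0:ℝ) 3 := ⟨by linarith [hs.1, hc.1], by linarith [hs.2, hc.2]⟩
    have hc3 : c ∈ Icc (0:ℝ) 3 := ⟨hc.1, by linarith [hc.2]⟩
    have hdsc : dist s c < δ₀ := by
      rw [Real.dist_eq, abs_of_pos (by linarith [hs.1] : (0:ℝ) < s - c)]
      linarith [hs.2]
    have := hδ s hs3 c hc3 hdsc
    rw [Real.dist_eq] at this
    rw [Real.norm_eq_abs]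
    linarith
  rw [Real.dist_eq, key, abs_mul, abs_of_pos (inv_pos.2 hε0)]
  have h2 : |c + ε - c| = ε := by rw [show c + ε - c = ε by ring, abs_of_pos hε0]
  rw [h2] at hbnd
  calc ε⁻¹ * |∫ s in c..c+ε, (F s - F c)| ≤ ε⁻¹ * ((η/2) * ε) := by
        apply mul_le_mul_of_nonneg_left hbnd (by positivity)
    _ = η/2 := by field_simp
    _ < η := by linarith

theorem stmt_13 (α : ℝ) (hα : α ∈ Set.Ioo (1/3 : ℝ) 1)
    (x : ℝ → ℝ) (hx : HolderOnIcc α 0 3 x)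
    (a : ℝ → ℝ) (ha : ContDiff ℝ 1 a)
    (u : ℝ × ℝ → ℝ) (hu : ContDiff ℝ 3 u) :
    ∀ t ∈ Set.Icc (0:ℝ) 2,
      ∃ I : ℝ,
        RVTendsto (fun s => deriv (fun ξ => u (ξ, a s)) (x s)) x 0 t I ∧
        u (x t, a t) = u (x 0, a 0) + I
          + ∫ s in (0:ℝ)..t, deriv (fun η => u (x s, η)) (a s) * deriv a s := by
  obtain ⟨hα1, hα2⟩ := hα
  obtain ⟨L, hLpos, hxL⟩ := hx
  intro t ht
  -- derivative data
  set Du := fderiv ℝ u with hDu_def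
  set D2u := fderiv ℝ Du with hD2u_def
  letI : NormedAddCommGroup (ℝ × ℝ →L[ℝ] ℝ × ℝ →L[ℝ] ℝ × ℝ →L[ℝ] ℝ) :=
    ContinuousLinearMap.toNormedAddCommGroup (E := ℝ × ℝ) (F := ℝ × ℝ →L[ℝ] ℝ × ℝ →L[ℝ] ℝ) (σ₁₂ := RingHom.id ℝ)
  letI : NormedSpace ℝ (ℝ × ℝ →L[ℝ] ℝ × ℝ →L[ℝ] ℝ × ℝ →L[ℝ] ℝ) :=
    ContinuousLinearMap.toNormedSpace (E := ℝ × ℝ) (F := ℝ × ℝ →L[ℝ] ℝ × ℝ →L[ℝ] ℝ) (σ₁₂ := RingHom.id ℝ) (𝕜' := ℝ)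
  set D3u := fderiv ℝ D2u with hD3u_def
  have hDu_cd : ContDiff ℝ 2 Du := hu.fderiv_right (by norm_num)
  have hD2u_cd : ContDiff ℝ 1 D2u := hDu_cd.fderiv_right (by norm_num)
  have hD3u_cd : ContDiff ℝ 0 D3u := hD2u_cd.fderiv_right (by norm_num)
  have hdu : ∀ z, HasFDerivAt u (Du z) z := fun z =>
    ((hu.differentiable (by norm_num)) z).hasFDerivAt
  have hd2u : ∀ z, HasFDerivAt Du (D2u z) z := fun z =>
    ((hDu_cd.differentiable (by norm_num)) z).hasFDerivAt
  have hd3u : ∀ z, HasFDerivAt D2u (D3u z) z := fun z =>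
    ((hD2u_cd.differentiable (by norm_num)) z).hasFDerivAt
  have cDu : Continuous Du := hDu_cd.continuous
  have cD2u : Continuous D2u := hD2u_cd.continuous
  have cD3u : Continuous D3u := hD3u_cd.continuous
  -- continuity of x on [0,3]
  have cx : ContinuousOn x (Icc 0 3) := by
    intro s hs
    have h1 : Tendsto (fun r : ℝ => |r - s|) (nhds s) (nhds 0) := by
      have hcont : Continuous (fun r : ℝ => |r - s|) :=
        (continuous_id.sub continuous_const).abs
      have := hcont.tendsto s
      simpa using this
    have h2 : ContinuousAt (fun y : ℝ => y ^ α) 0 :=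
      Real.continuousAt_rpow_const 0 α (Or.inr (by linarith))
    have h3 := h2.tendsto.comp h1
    rw [Real.zero_rpow (by linarith : α ≠ 0)] at h3
    have hb : Tendsto (fun r => L * |r - s| ^ α) (nhdsWithin s (Icc 0 3)) (nhds 0) := by
      have := h3.const_mul L
      simpa using this.mono_left nhdsWithin_le_nhds
    have : Tendsto x (nhdsWithin s (Icc 0 3)) (nhds (x s)) := by
      rw [tendsto_iff_dist_tendsto_zero]
      exact squeeze_zero' (eventually_nhdsWithin_of_forall fun r _ => dist_nonneg)
        (eventually_nhdsWithin_of_forall fun r hr => by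
          rw [Real.dist_eq]; exact hxL s hs r hr) hb
    exact this
  have ca : Continuous a := ha.continuous
  have ca' : Continuous (deriv a) := ha.continuous_deriv (le_refl 1)
  have hda : ∀ r : ℝ, HasDerivAt a (deriv a r) r := fun r =>
    ((ha.differentiable one_ne_zero) r).hasDerivAt
  -- compact ball K
  obtain ⟨Rx, hRx⟩ := isCompact_Icc.exists_bound_of_continuousOn cx
  obtain ⟨Ra, hRa⟩ := isCompact_Icc.exists_bound_of_continuousOn
    (ca.continuousOn : ContinuousOn a (Icc (0:ℝ) 3))
  set R : ℝ := |Rx| + |Ra| + 1 with hR_def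
  set K : Set (ℝ × ℝ) := Metric.closedBall 0 R with hK_def
  have hKconv : Convex ℝ K := convex_closedBall _ _
  have hKcomp : IsCompact K := isCompact_closedBall _ _
  have hKmem : ∀ s ∈ Icc (0:ℝ) 3, (x s, a s) ∈ K := by
    intro s hs
    rw [hK_def, Metric.mem_closedBall, dist_zero_right, Prod.norm_def]
    have h1 : ‖x s‖ ≤ Rx := hRx s hs
    have h2 : ‖a s‖ ≤ Ra := hRa s hs
    have h3 : Rx ≤ |Rx| := le_abs_self _
    have h4 : Ra ≤ |Ra| := le_abs_self _
    have h5 : (0:ℝ) ≤ |Rx| := abs_nonneg _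
    have h6 : (0:ℝ) ≤ |Ra| := abs_nonneg _
    apply max_le <;> simp only [hR_def] <;> [linarith; linarith]
  -- constants
  obtain ⟨M1', hM1'⟩ := hKcomp.exists_bound_of_continuousOn cDu.continuousOn
  obtain ⟨M2', hM2'⟩ := hKcomp.exists_bound_of_continuousOn (f := D2u) cD2u.continuousOn
  obtain ⟨M3', hM3'⟩ := hKcomp.exists_bound_of_continuousOn cD3u.continuousOn
  set M1 : ℝ := max M1' 0 with hM1_def
  set M2 : ℝ := max M2' 0 with hM2_def
  set M3 : ℝ := max M3' 0 with hM3_def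
  have hM1 : ∀ z ∈ K, ‖Du z‖ ≤ M1 := fun z hz => (hM1' z hz).trans (le_max_left _ _)
  have hM2 : ∀ z ∈ K, ‖D2u z‖ ≤ M2 := fun z hz => (hM2' z hz).trans (le_max_left _ _)
  have hM3 : ∀ z ∈ K, ‖D3u z‖ ≤ M3 := fun z hz => (hM3' z hz).trans (le_max_left _ _)
  have hM1nn : (0:ℝ) ≤ M1 := le_max_right _ _
  have hM2nn : (0:ℝ) ≤ M2 := le_max_right _ _
  have hM3nn : (0:ℝ) ≤ M3 := le_max_right _ _
  -- Lipschitz bounds on K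
  have hDuLip : ∀ p ∈ K, ∀ q ∈ K, ‖Du q - Du p‖ ≤ M2 * ‖q - p‖ := fun p hp q hq =>
    hKconv.norm_image_sub_le_of_norm_hasFDerivWithin_le
      (fun z hz => (hd2u z).hasFDerivWithinAt) (fun z hz => hM2 z hz) hp hq
  have hD2uLip : ∀ p ∈ K, ∀ q ∈ K, ‖D2u q - D2u p‖ ≤ M3 * ‖q - p‖ := fun p hp q hq =>
    hKconv.norm_image_sub_le_of_norm_hasFDerivWithin_le (𝕜 := ℝ) (f := D2u) (f' := D3u)
      (fun z hz => (hd3u z).hasFDerivWithinAt) (fun z hz => hM3 z hz) hp hq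
  -- bound for deriv a and Lipschitz bound for a on [0,3]
  obtain ⟨Ma', hMa'⟩ := isCompact_Icc.exists_bound_of_continuousOn
    (ca'.continuousOn : ContinuousOn (deriv a) (Icc (0:ℝ) 3))
  set Ma : ℝ := max Ma' 0 with hMa_def
  have hMann : (0:ℝ) ≤ Ma := le_max_right _ _
  have hMa : ∀ r ∈ Icc (0:ℝ) 3, ‖deriv a r‖ ≤ Ma := fun r hr =>
    (hMa' r hr).trans (le_max_left _ _)
  have haLip : ∀ s ∈ Icc (0:ℝ) 3, ∀ r ∈ Icc (0:ℝ) 3, |a r - a s| ≤ Ma * |r - s| := by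
    intro s hs r hr
    have := (convex_Icc (0:ℝ) 3).norm_image_sub_le_of_norm_hasDerivWithin_le
      (f' := deriv a) (fun w hw => (hda w).hasDerivWithinAt) hMa hs hr
    simpa [Real.norm_eq_abs] using this
  set Cw : ℝ := L + Ma with hCw_def
  have hCwpos : 0 < Cw := by rw [hCw_def]; linarith
  set CE : ℝ := 2 * M3 * Cw^3 + M2 * Cw * Ma with hCE_def
  have hCEnn : 0 ≤ CE := by rw [hCE_def]; positivity
  -- main functions
  set Fu : ℝ → ℝ := fun s => u (x s, a s) with hFu_def
  set g0 : ℝ → ℝ := fun s => Du (x s, a s) ((0:ℝ), (1:ℝ)) with hg0_def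
  set zf : ℝ → ℝ := fun s => Du (x s, a s) ((1:ℝ), (0:ℝ)) with hzf_def
  set B : ℝ := ∫ s in (0:ℝ)..t, g0 s * deriv a s with hB_def
  refine ⟨Fu t - Fu 0 - B, ?_, ?_⟩
  · -- RVTendsto
    have hderiv1 : (fun s => deriv (fun ξ => u (ξ, a s)) (x s)) = zf := by
      funext s
      exact ((hdu (x s, a s)).comp_hasDerivAt (x s)
        ((hasDerivAt_id (x s)).prodMk (hasDerivAt_const (x s) (a s)))).deriv
    rw [hderiv1]
    show Tendsto
      (fun ε : ℝ => ε⁻¹ * ∫ s in (0:ℝ)..t, ((zf (s + ε) + zf s) / 2) * (x (s + ε) - x s))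
      (nhdsWithin 0 (Ioi 0)) (nhds (Fu t - Fu 0 - B))
    -- continuity facts
    have hFuc : ContinuousOn Fu (Icc 0 3) :=
      hu.continuous.comp_continuousOn (cx.prodMk ca.continuousOn)
    have happly : ∀ v : ℝ × ℝ, Continuous (fun p : ℝ × ℝ => Du p v) := fun v =>
      cDu.clm_apply continuous_const
    have hg0c : ContinuousOn g0 (Icc 0 3) :=
      (happly _).comp_continuousOn (cx.prodMk ca.continuousOn)
    have hzfc : ContinuousOn zf (Icc 0 3) :=
      (happly _).comp_continuousOn (cx.prodMk ca.continuousOn)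
    have hsub03 : Icc (0:ℝ) t ⊆ Icc 0 3 := Icc_subset_Icc le_rfl (by linarith [ht.2])
    have hshift : ∀ ε ∈ Ioc (0:ℝ) 1, ∀ {h : ℝ → ℝ}, ContinuousOn h (Icc 0 3) →
        ContinuousOn (fun s => h (s + ε)) (Icc 0 t) := by
      intro ε hε h hh
      apply hh.comp (Continuous.continuousOn (continuous_id.add continuous_const))
      intro s hs
      simp only [mem_Icc, id_eq, Pi.add_apply] at hs ⊢
      exact ⟨by linarith [hs.1, hε.1.le], by linarith [hs.2, ht.2, hε.2]⟩
    have hII : ∀ {h : ℝ → ℝ}, ContinuousOn h (Icc 0 t) →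
        IntervalIntegrable h volume 0 t := by
      intro h hh
      apply ContinuousOn.intervalIntegrable
      rwa [uIcc_of_le ht.1]
    -- the error term
    set E0 : ℝ → ℝ → ℝ := fun s ε => Fu (s + ε) - Fu s
      - ((zf (s + ε) + zf s) / 2) * (x (s + ε) - x s)
      - g0 s * (a (s + ε) - a s) with hE0_def
    -- pointwise bound on the error term
    have hEbnd : ∀ ε ∈ Ioc (0:ℝ) 1, ∀ s ∈ Icc (0:ℝ) t,
        |E0 s ε| ≤ CE * (ε ^ (3*α) + ε ^ (1+α)) := by
      intro ε hε s hs
      have hεpos := hε.1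
      have hs3 : s ∈ Icc (0:ℝ) 3 := hsub03 hs
      have hsε3 : s + ε ∈ Icc (0:ℝ) 3 :=
        ⟨by linarith [hs.1, hε.1.le], by linarith [hs.2, ht.2, hε.2]⟩
      set p : ℝ × ℝ := (x s, a s) with hp_def
      set q : ℝ × ℝ := (x (s+ε), a (s+ε)) with hq_def
      have hpK : p ∈ K := hKmem s hs3
      have hqK : q ∈ K := hKmem (s+ε) hsε3
      have hseg : segment ℝ p q ⊆ K := hKconv.segment_subset hpK hqK
      have hδ : |x (s+ε) - x s| ≤ L * ε ^ α := by
        have h := hxL s hs3 (s+ε) hsε3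
        rwa [show s + ε - s = ε from by ring, abs_of_pos hεpos] at h
      have hτ : |a (s+ε) - a s| ≤ Ma * ε := by
        have h := haLip s hs3 (s+ε) hsε3
        rwa [show s + ε - s = ε from by ring, abs_of_pos hεpos] at h
      have hεα : ε ≤ ε ^ α := by
        have h := Real.rpow_le_rpow_of_exponent_ge hεpos hε.2 hα2.le
        rwa [Real.rpow_one] at h
      have hεαnn : (0:ℝ) ≤ ε ^ α := Real.rpow_nonneg hεpos.le α
      have hqp : q - p = (x (s+ε) - x s, a (s+ε) - a s) := rfl
      have hw : ‖q - p‖ ≤ Cw * ε ^ α := by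
        rw [hqp, Prod.norm_def]
        apply max_le
        · calc ‖x (s+ε) - x s‖ ≤ L * ε ^ α := by rw [Real.norm_eq_abs]; exact hδ
            _ ≤ Cw * ε ^ α := by
                apply mul_le_mul_of_nonneg_right _ hεαnn
                rw [hCw_def]; linarith
        · calc ‖a (s+ε) - a s‖ ≤ Ma * ε := by rw [Real.norm_eq_abs]; exact hτ
            _ ≤ Ma * ε ^ α := mul_le_mul_of_nonneg_left hεα hMann
            _ ≤ Cw * ε ^ α := by
                apply mul_le_mul_of_nonneg_right _ hεαnn
                rw [hCw_def]; linarith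
      have htrap := trapezoid (f := u) (f' := Du) (f'' := D2u) (p := p) (q := q) hdu hd2u hM3nn
        (fun z hz w hw' => hD2uLip w (hseg hw') z (hseg hz))
      have hqpsum : q - p
          = (x (s+ε) - x s) • ((1:ℝ),(0:ℝ)) + (a (s+ε) - a s) • ((0:ℝ),(1:ℝ)) := by
        rw [hqp]
        apply Prod.ext <;> simp
      have hdec : ∀ r : ℝ × ℝ, Du r (q - p)
          = Du r ((1:ℝ),(0:ℝ)) * (x (s+ε) - x s) + Du r ((0:ℝ),(1:ℝ)) * (a (s+ε) - a s) := by
        intro r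
        rw [hqpsum, map_add, _root_.map_smul, _root_.map_smul]
        simp only [smul_eq_mul]
        ring
      have hE0eq : E0 s ε = (u q - u p - (Du p (q - p) + Du q (q - p)) / 2)
          + (Du q ((0:ℝ),(1:ℝ)) - Du p ((0:ℝ),(1:ℝ))) / 2 * (a (s+ε) - a s) := by
        rw [hdec, hdec]
        simp only [hE0_def, hFu_def, hzf_def, hg0_def, hdec, hp_def, hq_def]
        ring
      have h01 : ‖((0:ℝ),(1:ℝ))‖ = 1 := by simp [Prod.norm_def]
      have hgdiff : |Du q ((0:ℝ),(1:ℝ)) - Du p ((0:ℝ),(1:ℝ))| ≤ M2 * (Cw * ε ^ α) := by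
        calc |Du q ((0:ℝ),(1:ℝ)) - Du p ((0:ℝ),(1:ℝ))|
            = ‖(Du q - Du p) ((0:ℝ),(1:ℝ))‖ := by
              have happ : (Du q - Du p) ((0:ℝ),(1:ℝ))
                  = Du q ((0:ℝ),(1:ℝ)) - Du p ((0:ℝ),(1:ℝ)) := by simp
              rw [Real.norm_eq_abs, happ]
          _ ≤ ‖Du q - Du p‖ * ‖((0:ℝ),(1:ℝ))‖ := ContinuousLinearMap.le_opNorm _ _
          _ = ‖Du q - Du p‖ := by rw [h01, mul_one]
          _ ≤ M2 * ‖q - p‖ := hDuLip p hpK q hqK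
          _ ≤ M2 * (Cw * ε ^ α) := mul_le_mul_of_nonneg_left hw hM2nn
      have hcube : ‖q - p‖^3 ≤ Cw^3 * ε ^ (3*α) := by
        have h1 : ‖q - p‖^3 ≤ (Cw * ε ^ α)^3 := pow_le_pow_left₀ (norm_nonneg _) hw 3
        have h2 : (ε ^ α)^(3:ℕ) = ε ^ (3*α) := by
          rw [← Real.rpow_natCast (ε ^ α) 3, ← Real.rpow_mul hεpos.le]
          norm_num
          ring_nf
        calc ‖q - p‖^3 ≤ (Cw * ε^α)^3 := h1
          _ = Cw^3 * (ε^α)^3 := by ring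
          _ = Cw^3 * ε^(3*α) := by rw [h2]
      have hεsum : ε ^ α * ε = ε ^ (1+α) := by
        rw [show (1:ℝ)+α = α+1 from by ring, Real.rpow_add_one hεpos.ne']
      have hterm1 : |u q - u p - (Du p (q - p) + Du q (q - p)) / 2|
          ≤ 2*M3*(Cw^3 * ε^(3*α)) := by
        calc |u q - u p - (Du p (q - p) + Du q (q - p)) / 2|
            ≤ 2*M3*‖q - p‖^3 := htrap
          _ ≤ 2*M3*(Cw^3 * ε^(3*α)) := mul_le_mul_of_nonneg_left hcube (by positivity)
      have hterm2 : |(Du q ((0:ℝ),(1:ℝ)) - Du p ((0:ℝ),(1:ℝ))) / 2 * (a (s+ε) - a s)|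
          ≤ M2 * Cw * Ma * ε^(1+α) := by
        rw [abs_mul, abs_div, show |(2:ℝ)| = 2 from by norm_num]
        calc |Du q ((0:ℝ),(1:ℝ)) - Du p ((0:ℝ),(1:ℝ))| / 2 * |a (s+ε) - a s|
            ≤ (M2 * (Cw * ε ^ α)) / 2 * (Ma * ε) := by
              apply mul_le_mul ((div_le_div_iff_of_pos_right (by norm_num : (0:ℝ) < 2)).mpr hgdiff)
                hτ (abs_nonneg _) (by positivity)
          _ = (M2 * Cw * Ma / 2) * (ε^α * ε) := by ring
          _ = (M2 * Cw * Ma / 2) * ε^(1+α) := by rw [hεsum]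
          _ ≤ M2 * Cw * Ma * ε^(1+α) := by
              have hnn : (0:ℝ) ≤ ε^(1+α) := Real.rpow_nonneg hεpos.le _
              have hprod : (0:ℝ) ≤ M2 * Cw * Ma :=
                mul_nonneg (mul_nonneg hM2nn hCwpos.le) hMann
              exact mul_le_mul_of_nonneg_right (half_le_self hprod) hnn
      calc |E0 s ε| ≤ |u q - u p - (Du p (q - p) + Du q (q - p)) / 2|
            + |(Du q ((0:ℝ),(1:ℝ)) - Du p ((0:ℝ),(1:ℝ))) / 2 * (a (s+ε) - a s)| := by
            rw [hE0eq]; exact abs_add_le _ _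
        _ ≤ 2*M3*(Cw^3 * ε^(3*α)) + M2 * Cw * Ma * ε^(1+α) := add_le_add hterm1 hterm2
        _ ≤ CE * (ε ^ (3*α) + ε ^ (1+α)) := by
            rw [hCE_def]
            have hnn1 : (0:ℝ) ≤ ε^(3*α) := Real.rpow_nonneg hεpos.le _
            have hnn2 : (0:ℝ) ≤ ε^(1+α) := Real.rpow_nonneg hεpos.le _
            nlinarith [mul_nonneg (mul_nonneg hM2nn hCwpos.le) hMann,
              mul_nonneg hM3nn (pow_nonneg hCwpos.le 3)]
    -- the ε-identity
    have hident : ∀ ε ∈ Ioc (0:ℝ) 1,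
        ε⁻¹ * (∫ s in (0:ℝ)..t, ((zf (s + ε) + zf s) / 2) * (x (s + ε) - x s))
        = (ε⁻¹ * ∫ s in (0:ℝ)..t, (Fu (s + ε) - Fu s)) - B
          - (ε⁻¹ * ∫ s in (0:ℝ)..t, g0 s * (a (s + ε) - a s - ε * deriv a s))
          - (ε⁻¹ * ∫ s in (0:ℝ)..t, E0 s ε) := by
      intro ε hε
      have hεne : ε ≠ 0 := hε.1.ne'
      have i_phi : IntervalIntegrable
          (fun s => ((zf (s + ε) + zf s) / 2) * (x (s + ε) - x s)) volume 0 t :=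
        hII ((((hshift ε hε hzfc).add (hzfc.mono hsub03)).div_const 2).mul
          ((hshift ε hε cx).sub (cx.mono hsub03)))
      have i_F : IntervalIntegrable (fun s => Fu (s + ε) - Fu s) volume 0 t :=
        hII ((hshift ε hε hFuc).sub (hFuc.mono hsub03))
      have i_ga : IntervalIntegrable (fun s => g0 s * deriv a s * ε) volume 0 t :=
        hII (((hg0c.mono hsub03).mul ca'.continuousOn).mul continuousOn_const)
      have i_rho : IntervalIntegrable
          (fun s => g0 s * (a (s + ε) - a s - ε * deriv a s)) volume 0 t :=
        hII ((hg0c.mono hsub03).mul (((hshift ε hε ca.continuousOn).sub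
          ca.continuousOn).sub (continuousOn_const.mul ca'.continuousOn)))
      have hfunE : (fun s => E0 s ε) = fun s =>
          (Fu (s + ε) - Fu s) - (g0 s * deriv a s * ε)
          - (g0 s * (a (s + ε) - a s - ε * deriv a s))
          - (((zf (s + ε) + zf s) / 2) * (x (s + ε) - x s)) := by
        funext s
        simp only [hE0_def]
        ring
      have hintE : (∫ s in (0:ℝ)..t, E0 s ε)
          = (∫ s in (0:ℝ)..t, (Fu (s + ε) - Fu s))
            - (∫ s in (0:ℝ)..t, g0 s * deriv a s * ε)
            - (∫ s in (0:ℝ)..t, g0 s * (a (s + ε) - a s - ε * deriv a s))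
            - (∫ s in (0:ℝ)..t, ((zf (s + ε) + zf s) / 2) * (x (s + ε) - x s)) := by
        rw [hfunE, intervalIntegral.integral_sub ((i_F.sub i_ga).sub i_rho) i_phi,
          intervalIntegral.integral_sub (i_F.sub i_ga) i_rho,
          intervalIntegral.integral_sub i_F i_ga]
      have hBe : (∫ s in (0:ℝ)..t, g0 s * deriv a s * ε) = B * ε := by
        rw [intervalIntegral.integral_mul_const, hB_def]
      rw [hintE, hBe]
      field_simp
      ring
    -- the three limits
    have hA : Tendsto (fun ε : ℝ => ε⁻¹ * ∫ s in (0:ℝ)..t, (Fu (s + ε) - Fu s))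
        (nhdsWithin 0 (Ioi 0)) (nhds (Fu t - Fu 0)) := by
      have havg0 : Tendsto (fun ε : ℝ => ε⁻¹ * ∫ s in (0:ℝ)..(0+ε), Fu s)
          (nhdsWithin 0 (Ioi 0)) (nhds (Fu 0)) := avg_tendsto hFuc ⟨le_rfl, by norm_num⟩
      have havgt : Tendsto (fun ε : ℝ => ε⁻¹ * ∫ s in t..(t+ε), Fu s)
          (nhdsWithin 0 (Ioi 0)) (nhds (Fu t)) := avg_tendsto hFuc ht
      refine Tendsto.congr' ?_ (havgt.sub havg0)
      filter_upwards [Ioc_mem_nhdsGT_of_mem (show (0:ℝ) ∈ Ico (0:ℝ) 1 by norm_num)] with ε hε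
      have isub : ∀ {a' b' : ℝ}, 0 ≤ a' → a' ≤ b' → b' ≤ 3 →
          IntervalIntegrable Fu volume a' b' := by
        intro a' b' h1 h2 h3
        apply ContinuousOn.intervalIntegrable
        rw [uIcc_of_le h2]
        exact hFuc.mono (Icc_subset_Icc h1 h3)
      have i1 : IntervalIntegrable Fu volume 0 ε := isub le_rfl hε.1.le (by linarith [hε.2])
      have i2 : IntervalIntegrable Fu volume ε (t+ε) :=
        isub hε.1.le (by linarith [ht.1]) (by linarith [ht.2, hε.2])
      have i3 : IntervalIntegrable Fu volume 0 t := isub le_rfl ht.1 (by linarith [ht.2])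
      have i4 : IntervalIntegrable Fu volume t (t+ε) :=
        isub ht.1 (by linarith [hε.1.le]) (by linarith [ht.2, hε.2])
      have ishift : IntervalIntegrable (fun s => Fu (s+ε)) volume 0 t := hII (hshift ε hε hFuc)
      have e1 : (∫ s in (0:ℝ)..t, Fu (s + ε)) = ∫ s in ε..(t+ε), Fu s := by
        have := intervalIntegral.integral_comp_add_right (a := (0:ℝ)) (b := t) Fu ε
        simpa using this
      have eqa := intervalIntegral.integral_add_adjacent_intervals i1 i2
      have eqb := intervalIntegral.integral_add_adjacent_intervals i3 i4
      have e2 : (∫ s in (0:ℝ)..t, (Fu (s + ε) - Fu s))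
          = (∫ s in t..(t+ε), Fu s) - (∫ s in (0:ℝ)..(0+ε), Fu s) := by
        rw [intervalIntegral.integral_sub ishift i3, e1]
        simp only [zero_add]
        linarith
      rw [e2]
      ring
    have hC : Tendsto (fun ε : ℝ =>
          ε⁻¹ * ∫ s in (0:ℝ)..t, g0 s * (a (s + ε) - a s - ε * deriv a s))
        (nhdsWithin 0 (Ioi 0)) (nhds 0) := by
      rw [Metric.tendsto_nhdsWithin_nhds]
      intro η hη
      have hucda := isCompact_Icc.uniformContinuousOn_of_continuous
        (ca'.continuousOn : ContinuousOn (deriv a) (Icc (0:ℝ) 3))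
      rw [Metric.uniformContinuousOn_iff] at hucda
      have ht1 : (0:ℝ) < t + 1 := by linarith [ht.1]
      set η' : ℝ := η / (2*(M1+1)*(t+1)) with hη'_def
      have hη'pos : 0 < η' := by rw [hη'_def]; positivity
      obtain ⟨δ₀, hδ₀, hδ⟩ := hucda η' hη'pos
      refine ⟨min δ₀ 1, by positivity, ?_⟩
      intro ε hεm hdist
      have hεpos : (0:ℝ) < ε := hεm
      rw [dist_zero_right, Real.norm_eq_abs, abs_of_pos hεpos] at hdist
      have hεδ : ε < δ₀ := lt_of_lt_of_le hdist (min_le_left _ _)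
      have hε1 : ε ≤ 1 := (lt_of_lt_of_le hdist (min_le_right _ _)).le
      have h01 : ‖((0:ℝ),(1:ℝ))‖ = 1 := by simp [Prod.norm_def]
      have hptw : ∀ s ∈ Set.uIoc (0:ℝ) t,
          ‖g0 s * (a (s+ε) - a s - ε * deriv a s)‖ ≤ M1 * (η' * ε) := by
        intro s hsI
        rw [uIoc_of_le ht.1] at hsI
        have hs3 : s ∈ Icc (0:ℝ) 3 := ⟨hsI.1.le, by linarith [hsI.2, ht.2]⟩
        have hsub' : Icc s (s+ε) ⊆ Icc (0:ℝ) 3 :=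
          Icc_subset_Icc hs3.1 (by linarith [hsI.2, ht.2])
        have hrho : ‖a (s+ε) - a s - ε * deriv a s‖ ≤ η' * ε := by
          have hmvt := (convex_Icc s (s+ε)).norm_image_sub_le_of_norm_hasDerivWithin_le
            (f := fun r => a r - r * deriv a s) (f' := fun r => deriv a r - deriv a s)
            (fun r _ => by
              convert ((hda r).sub ((hasDerivAt_id r).mul_const (deriv a s))).hasDerivWithinAt using 1 <;> [rfl; simp])
            (fun r hr => by
              have hr3 : r ∈ Icc (0:ℝ) 3 := hsub' hr
              have hdrs : dist r s < δ₀ := by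
                rw [Real.dist_eq, abs_of_nonneg (by linarith [hr.1] : (0:ℝ) ≤ r - s)]
                linarith [hr.2]
              have hcl := hδ r hr3 s hs3 hdrs
              rw [Real.dist_eq] at hcl
              rw [Real.norm_eq_abs]
              exact hcl.le)
            (left_mem_Icc.mpr (by linarith)) (right_mem_Icc.mpr (by linarith))
          rw [show η' * ‖s + ε - s‖ = η' * ε from by
            rw [show s + ε - s = ε from by ring, Real.norm_eq_abs, abs_of_pos hεpos]] at hmvt
          calc ‖a (s+ε) - a s - ε * deriv a s‖
              = ‖(a (s+ε) - (s+ε) * deriv a s) - (a s - s * deriv a s)‖ := by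
                rw [Real.norm_eq_abs, Real.norm_eq_abs]; congr 1; ring
            _ ≤ η' * ε := hmvt
        have hg0b : ‖g0 s‖ ≤ M1 := by
          simp only [hg0_def]
          calc ‖Du (x s, a s) ((0:ℝ),(1:ℝ))‖
              ≤ ‖Du (x s, a s)‖ * ‖((0:ℝ),(1:ℝ))‖ := ContinuousLinearMap.le_opNorm _ _
            _ = ‖Du (x s, a s)‖ := by rw [h01, mul_one]
            _ ≤ M1 := hM1 _ (hKmem s hs3)
        calc ‖g0 s * (a (s+ε) - a s - ε * deriv a s)‖
            = ‖g0 s‖ * ‖a (s+ε) - a s - ε * deriv a s‖ := norm_mul _ _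
          _ ≤ M1 * (η' * ε) := mul_le_mul hg0b hrho (norm_nonneg _) hM1nn
      have hint := intervalIntegral.norm_integral_le_of_norm_le_const hptw
      rw [dist_zero_right, norm_mul, Real.norm_eq_abs ε⁻¹, abs_of_pos (inv_pos.2 hεpos)]
      have hkey : M1 * η' * t ≤ η / 2 := by
        have h2 : (M1+1)*(t+1)*η' = η/2 := by
          rw [hη'_def]; field_simp
        nlinarith [hη'pos, hM1nn, ht.1]
      calc ε⁻¹ * ‖∫ s in (0:ℝ)..t, g0 s * (a (s+ε) - a s - ε * deriv a s)‖
          ≤ ε⁻¹ * (M1 * (η' * ε) * |t - 0|) :=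
            mul_le_mul_of_nonneg_left hint (by positivity)
        _ = M1 * η' * t := by
            rw [sub_zero, abs_of_nonneg ht.1]; field_simp
        _ ≤ η / 2 := hkey
        _ < η := by linarith
    have hD : Tendsto (fun ε : ℝ => ε⁻¹ * ∫ s in (0:ℝ)..t, E0 s ε)
        (nhdsWithin 0 (Ioi 0)) (nhds 0) := by
      have hbound : ∀ᶠ ε in nhdsWithin (0:ℝ) (Ioi 0),
          ‖ε⁻¹ * ∫ s in (0:ℝ)..t, E0 s ε‖ ≤ (CE * t) * (ε^(3*α-1) + ε^α) := by
        filter_upwards [Ioc_mem_nhdsGT_of_mem (show (0:ℝ) ∈ Ico (0:ℝ) 1 by norm_num)]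
          with ε hε
        have hεpos := hε.1
        have hptw : ∀ s ∈ Set.uIoc (0:ℝ) t, ‖E0 s ε‖ ≤ CE * (ε^(3*α) + ε^(1+α)) := by
          intro s hsI
          rw [uIoc_of_le ht.1] at hsI
          rw [Real.norm_eq_abs]
          exact hEbnd ε hε s ⟨hsI.1.le, hsI.2⟩
        have hint := intervalIntegral.norm_integral_le_of_norm_le_const hptw
        have e3 : ε ^ (3*α) = ε ^ (3*α - 1) * ε := by
          rw [show 3*α = (3*α-1)+1 from by ring, Real.rpow_add_one hεpos.ne']
          ring_nf
        have e4 : ε ^ (1+α) = ε ^ α * ε := by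
          rw [show (1:ℝ)+α = α+1 from by ring, Real.rpow_add_one hεpos.ne']
        rw [norm_mul, Real.norm_eq_abs ε⁻¹, abs_of_pos (inv_pos.2 hεpos)]
        calc ε⁻¹ * ‖∫ s in (0:ℝ)..t, E0 s ε‖
            ≤ ε⁻¹ * (CE * (ε^(3*α) + ε^(1+α)) * |t - 0|) :=
              mul_le_mul_of_nonneg_left hint (by positivity)
          _ = (CE * t) * (ε^(3*α-1) + ε^α) := by
              rw [e3, e4, sub_zero, abs_of_nonneg ht.1]
              field_simp
      have hg : Tendsto (fun ε : ℝ => (CE * t) * (ε^(3*α-1) + ε^α))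
          (nhdsWithin 0 (Ioi 0)) (nhds 0) := by
        have h1 := rpow_tendsto (show (0:ℝ) < 3*α-1 by linarith)
        have h2 := rpow_tendsto (show (0:ℝ) < α by linarith)
        have h3 := (h1.add h2).const_mul (CE * t)
        simpa using h3
      exact squeeze_zero_norm' hbound hg
    have hcomb := ((hA.sub (tendsto_const_nhds (x := B))).sub hC).sub hD
    rw [sub_zero, sub_zero] at hcomb
    refine Tendsto.congr' ?_ hcomb
    filter_upwards [Ioc_mem_nhdsGT_of_mem (show (0:ℝ) ∈ Ico (0:ℝ) 1 by constructor <;> norm_num)]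
      with ε hε
    exact (hident ε hε).symm
  · -- change of variables formula
    have hderiv2 : ∀ s, deriv (fun η => u (x s, η)) (a s) = g0 s := fun s =>
      ((hdu (x s, a s)).comp_hasDerivAt (a s)
        ((hasDerivAt_const (a s) (x s)).prodMk (hasDerivAt_id (a s)))).deriv
    rw [intervalIntegral.integral_congr (g := fun s => g0 s * deriv a s)
      (fun s _ => by rw [hderiv2 s])]
    rw [← hB_def]
    have h1 : Fu t = u (x t, a t) := rfl
    have h2 : Fu 0 = u (x 0, a 0) := rfl
    rw [← h1, ← h2]
    ring
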